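/- Let A be an n×n integer matrix with determinant ±1 and f_A the induced automorphism of Tⁿ = ℝⁿ/ℤⁿ. Then the set of periodic points of f_A (points x with f_A^k(x) = x for some k ≥ 1) coincides with the set of points of Tⁿ having all coordinates rational (i.e., the image p(ℚⁿ) of rational vectors) if and only if no complex eigenvalue of A is a root of unity. -/

import Mathlib

open Matrix Polynomial
open scoped Classical

noncomputable section

/-- The `n`-torus `ℝⁿ/ℤⁿ`, realized as `Fin n → ℝ/ℤ`. -/
abbrev Torus (n : ℕ) := Fin n → AddCircle (1 : ℝ)

/-- The projection `p : ℝⁿ → Tⁿ`. -/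
def torusProj (n : ℕ) (x : Fin n → ℝ) : Torus n := fun i => (x i : AddCircle (1 : ℝ))

/-- The linear action of an integer matrix on `ℝⁿ`. -/
def realMulVec {n : ℕ} (A : Matrix (Fin n) (Fin n) ℤ) (x : Fin n → ℝ) : Fin n → ℝ :=
  (A.map (Int.cast : ℤ → ℝ)).mulVec x

/-- The complex eigenvalues (with multiplicity) of an integer matrix. -/
def eigsC {n : ℕ} (A : Matrix (Fin n) (Fin n) ℤ) : Multiset ℂ :=
  ((A.map (Int.cast : ℤ → ℂ)).charpoly).roots

/-- A complex number is a root of unity if some positive power of it is `1`. -/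
def IsRootOfUnity (z : ℂ) : Prop := ∃ k : ℕ, 1 ≤ k ∧ z ^ k = 1

lemma mem_spectrum_iff_root {n : ℕ} (M : Matrix (Fin n) (Fin n) ℂ) (μ : ℂ) :
    μ ∈ spectrum ℂ M ↔ μ ∈ M.charpoly.roots := by
  rw [spectrum.mem_iff, Polynomial.mem_roots (M.charpoly_monic.ne_zero), IsRoot.def,
    show M.charpoly.eval μ = (scalar (Fin n) μ - M).det by
      rw [Matrix.charpoly, eval_det, matPolyEquiv_charmatrix, eval_sub, eval_X, eval_C],
    show (algebraMap ℂ (Matrix (Fin n) (Fin n) ℂ)) μ = scalar (Fin n) μ from rfl,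
    Matrix.isUnit_iff_isUnit_det, isUnit_iff_ne_zero, not_ne_iff]

lemma det_pow_sub_one_eq_zero_iff {n : ℕ} (A : Matrix (Fin n) (Fin n) ℤ) {k : ℕ} (hk : 1 ≤ k) :
    (A ^ k - 1).det = 0 ↔ ∃ z ∈ ((A.map (Int.cast : ℤ → ℂ)).charpoly).roots, z ^ k = 1 := by
  set C : Matrix (Fin n) (Fin n) ℂ := A.map (Int.cast : ℤ → ℂ) with hC
  have hmap : (A ^ k - 1).map (Int.cast : ℤ → ℂ) = C ^ k - 1 := by
    have : C = (Int.castRingHom ℂ).mapMatrix A := rfl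
    rw [this, show (A ^ k - 1).map (Int.cast : ℤ → ℂ)
        = (Int.castRingHom ℂ).mapMatrix (A ^ k - 1) from rfl, map_sub, map_pow, _root_.map_one]
  have h1 : (A ^ k - 1).det = 0 ↔ (C ^ k - 1).det = 0 := by
    rw [← hmap, show (A ^ k - 1).map (Int.cast : ℤ → ℂ) = (Int.castRingHom ℂ).mapMatrix (A ^ k - 1) from rfl, ← RingHom.map_det, eq_intCast, Int.cast_eq_zero]
  rw [h1]
  have h2 : (C ^ k - 1).det = 0 ↔ (1 : ℂ) ∈ spectrum ℂ (C ^ k) := by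
    rw [spectrum.mem_iff, _root_.map_one, show (1 : Matrix (Fin n) (Fin n) ℂ) - C ^ k
      = -(C ^ k - 1) from (neg_sub _ _).symm, IsUnit.neg_iff, Matrix.isUnit_iff_isUnit_det,
      isUnit_iff_ne_zero, not_ne_iff]
  rw [h2, spectrum.map_pow_of_pos _ hk]
  constructor
  · rintro ⟨z, hz, hz1⟩
    exact ⟨z, (mem_spectrum_iff_root C z).1 hz, hz1⟩
  · rintro ⟨z, hz, hz1⟩
    exact ⟨z, (mem_spectrum_iff_root C z).2 hz, hz1⟩





lemma torusProj_eq_iff {n : ℕ} {x y : Fin n → ℝ} :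
    torusProj n x = torusProj n y ↔ ∀ i, ∃ m : ℤ, x i - y i = m := by
  rw [funext_iff]
  refine forall_congr' fun i => ?_
  rw [show (torusProj n x i = torusProj n y i) ↔ (x i : AddCircle (1:ℝ)) = (y i : AddCircle (1:ℝ)) from Iff.rfl]
  rw [QuotientAddGroup.eq_iff_sub_mem, AddSubgroup.mem_zmultiples_iff]
  constructor
  · rintro ⟨m, hm⟩; exact ⟨m, by simpa using hm.symm⟩
  · rintro ⟨m, hm⟩; exact ⟨m, by simp [hm]⟩

lemma torusProj_surjective {n : ℕ} : Function.Surjective (torusProj n) := by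
  intro x
  choose v hv using fun i => QuotientAddGroup.mk_surjective (x i)
  exact ⟨v, funext fun i => hv i⟩

lemma realMulVec_mul {n : ℕ} (A B : Matrix (Fin n) (Fin n) ℤ) (x : Fin n → ℝ) :
    realMulVec A (realMulVec B x) = realMulVec (A * B) x := by
  unfold realMulVec
  rw [mulVec_mulVec, show A.map (Int.cast : ℤ → ℝ) * B.map Int.cast
    = (A * B).map Int.cast from (_root_.map_mul (Int.castRingHom ℝ).mapMatrix A B).symm]

lemma iterate_fA {n : ℕ} (A : Matrix (Fin n) (Fin n) ℤ) (fA : Torus n → Torus n)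
    (hfA : ∀ x, fA (torusProj n x) = torusProj n (realMulVec A x)) (k : ℕ) (x : Fin n → ℝ) :
    fA^[k] (torusProj n x) = torusProj n (realMulVec (A ^ k) x) := by
  induction k with
  | zero => simp [realMulVec, show ((1 : Matrix (Fin n) (Fin n) ℤ).map (Int.cast : ℤ → ℝ)) = 1
      from _root_.map_one (Int.castRingHom ℝ).mapMatrix]
  | succ k ih =>
    rw [Function.iterate_succ_apply', ih, hfA, realMulVec_mul, ← pow_succ']

lemma mulVec_inj_of_isUnit {n : ℕ} {R : Type*} [CommRing R] {M : Matrix (Fin n) (Fin n) R}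
    (h : IsUnit M) : Function.Injective M.mulVec := by
  obtain ⟨u, rfl⟩ := h
  intro v w hvw
  have := congrArg (mulVec (↑u⁻¹ : Matrix (Fin n) (Fin n) R)) hvw
  simpa [mulVec_mulVec, ← Units.val_mul] using this

lemma period_iff {n : ℕ} (A : Matrix (Fin n) (Fin n) ℤ) (fA : Torus n → Torus n)
    (hfA : ∀ x, fA (torusProj n x) = torusProj n (realMulVec A x)) (k : ℕ) (v : Fin n → ℝ) :
    fA^[k] (torusProj n v) = torusProj n v ↔
      ∃ m : Fin n → ℤ, ((A ^ k - 1).map (Int.cast : ℤ → ℝ)).mulVec v = fun i => (m i : ℝ) := by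
  rw [iterate_fA A fA hfA k v, torusProj_eq_iff]
  have key : ∀ i, realMulVec (A ^ k) v i - v i = (((A ^ k - 1).map (Int.cast : ℤ → ℝ)).mulVec v) i := by
    intro i
    rw [show (A ^ k - 1).map (Int.cast : ℤ → ℝ)
        = (A ^ k).map (Int.cast : ℤ → ℝ) - 1 by
      rw [show (A ^ k - 1).map (Int.cast : ℤ → ℝ)
          = (Int.castRingHom ℝ).mapMatrix (A ^ k - 1) from rfl, map_sub, _root_.map_one]; rfl]
    rw [sub_mulVec, one_mulVec]
    rfl
  constructor
  · intro h
    choose m hm using h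
    exact ⟨m, funext fun i => by rw [← key i, hm i]⟩
  · rintro ⟨m, hm⟩ i
    exact ⟨m i, by rw [key i, hm]⟩

lemma rat_periodic {n : ℕ} (A : Matrix (Fin n) (Fin n) ℤ) (hAdet : A.det = 1 ∨ A.det = -1)
    (q : Fin n → ℚ) :
    ∃ k : ℕ, 1 ≤ k ∧ ∃ m : Fin n → ℤ,
      ((A ^ k - 1).map (Int.cast : ℤ → ℝ)).mulVec (fun i => (q i : ℝ)) = fun i => (m i : ℝ) := by
  classical
  set d : ℕ := ∏ i, (q i).den with hd
  have hdpos : 0 < d := Finset.prod_pos fun i _ => (q i).pos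
  haveI : NeZero d := ⟨hdpos.ne'⟩
  -- integer numerators: q i * d = m i
  have hden : ∀ i, ((q i).den : ℕ) ∣ d := fun i => Finset.dvd_prod_of_mem _ (Finset.mem_univ i)
  set m : Fin n → ℤ := fun i => (q i).num * ((d : ℤ) / (q i).den) with hmdef
  have hm : ∀ i, (q i : ℚ) * (d : ℚ) = (m i : ℚ) := by
    intro i
    obtain ⟨c, hc⟩ := hden i
    have hdiv : (d : ℤ) / (q i).den = (c : ℤ) := by
      rw [hc]; push_cast; exact Int.mul_ediv_cancel_left _ (by exact_mod_cast (q i).den_nz)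
    have hqden : (q i : ℚ) * ((q i).den : ℚ) = ((q i).num : ℚ) := by
      rw [Rat.mul_den_eq_num]
    rw [hmdef]
    push_cast [hdiv, hc]
    rw [← mul_assoc, hqden]
    have hcan : ((q i).den : ℤ) * (c : ℤ) / ((q i).den : ℤ) = (c : ℤ) :=
      Int.mul_ediv_cancel_left _ (by exact_mod_cast (q i).den_nz)
    rw [hcan]; norm_cast
  -- pigeonhole in ZMod d
  set Mb : Matrix (Fin n) (Fin n) (ZMod d) := A.map (Int.cast : ℤ → ZMod d) with hMb
  have hMunit : IsUnit Mb := by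
    rw [Matrix.isUnit_iff_isUnit_det]
    have : Mb.det = ((A.det : ℤ) : ZMod d) := by
      rw [hMb, show A.map (Int.cast : ℤ → ZMod d) = (Int.castRingHom (ZMod d)).mapMatrix A from rfl,
        ← RingHom.map_det, eq_intCast]
    rw [this]
    rcases hAdet with h | h <;> rw [h]
    · simp
    · push_cast; exact isUnit_one.neg
  set w : Fin n → ZMod d := fun i => ((m i : ZMod d)) with hw
  obtain ⟨a, b, hab, hfab⟩ := Finite.exists_ne_map_eq_of_infinite fun j : ℕ => (Mb ^ j).mulVec w
  wlog hlt : a < b generalizing a b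
  · exact this b a hab.symm hfab.symm (by omega)
  set k : ℕ := b - a with hk
  have hk1 : 1 ≤ k := by omega
  have hper : (Mb ^ k).mulVec w = w := by
    have hpow : Mb ^ b = Mb ^ a * Mb ^ k := by rw [← pow_add]; congr 1; omega
    have : (Mb ^ a).mulVec ((Mb ^ k).mulVec w) = (Mb ^ a).mulVec w := by
      rw [mulVec_mulVec, ← hpow, ← hfab]
    exact mulVec_inj_of_isUnit (hMunit.pow a) this
  -- divisibility
  have hdvd : ∀ i, (d : ℤ) ∣ ((A ^ k - 1).mulVec m) i := by
    intro i
    rw [← ZMod.intCast_zmod_eq_zero_iff_dvd]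
    have hc := RingHom.map_mulVec (Int.castRingHom (ZMod d)) (A ^ k - 1) m i
    rw [eq_intCast] at hc
    rw [hc]
    have hmapk : (A ^ k - 1).map (Int.castRingHom (ZMod d)) = Mb ^ k - 1 := by
      rw [show (A ^ k - 1).map (Int.castRingHom (ZMod d) : ℤ → ZMod d)
          = (Int.castRingHom (ZMod d)).mapMatrix (A ^ k - 1) from rfl, map_sub, map_pow,
        _root_.map_one]
      rfl
    have hcomp : (Int.castRingHom (ZMod d) : ℤ → ZMod d) ∘ m = w := by
      funext i; simp [hw]
    rw [show (A ^ k - 1).map (Int.castRingHom (ZMod d) : ℤ → ZMod d) = Mb ^ k - 1 from hmapk, hcomp,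
      sub_mulVec, one_mulVec, hper, sub_self]
    rfl
  choose c hc using fun i => hdvd i
  refine ⟨k, hk1, c, ?_⟩
  funext i
  have hqr : (fun j => (q j : ℝ)) = (d : ℝ)⁻¹ • fun j => ((m j : ℝ)) := by
    funext j
    have hd0 : (d : ℝ) ≠ 0 := Nat.cast_ne_zero.2 hdpos.ne'
    have h1 : (q j : ℝ) * (d : ℝ) = (m j : ℝ) := by exact_mod_cast congrArg (fun r : ℚ => (r : ℝ)) (hm j)
    simp only [Pi.smul_apply, smul_eq_mul]
    field_simp
    linarith [h1]
  rw [hqr, mulVec_smul]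
  have hmv : ((A ^ k - 1).map (Int.cast : ℤ → ℝ)).mulVec (fun j => ((m j : ℝ)))
      = fun i => (((A ^ k - 1).mulVec m) i : ℝ) := by
    funext i
    exact (RingHom.map_mulVec (Int.castRingHom ℝ) (A ^ k - 1) m i).symm
  rw [hmv]
  have hd0 : (d : ℝ) ≠ 0 := Nat.cast_ne_zero.2 hdpos.ne'
  simp only [Pi.smul_apply, smul_eq_mul, hc i]
  push_cast
  field_simp

/-- The periodic points of `f_A` are exactly the rational points of the torus iff no complex
eigenvalue of `A` is a root of unity. -/
theorem periodic_points_eq_rational_iff {n : ℕ} (A : Matrix (Fin n) (Fin n) ℤ)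
    (hAdet : A.det = 1 ∨ A.det = -1)
    (fA : Torus n → Torus n)
    (hfA : ∀ x, fA (torusProj n x) = torusProj n (realMulVec A x)) :
    ({x : Torus n | ∃ k : ℕ, 1 ≤ k ∧ fA^[k] x = x} =
        {x : Torus n | ∃ q : Fin n → ℚ, x = torusProj n fun i => (q i : ℝ)}) ↔
      ∀ z ∈ eigsC A, ¬ IsRootOfUnity z := by
  constructor
  · -- sets equal → no eigenvalue is a root of unity
    intro hEq z hz hroot
    obtain ⟨k, hk1, hzk⟩ := hroot
    have hdet0 : (A ^ k - 1).det = 0 := (det_pow_sub_one_eq_zero_iff A hk1).2 ⟨z, hz, hzk⟩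
    have hdetQ : ((A ^ k - 1).map (Int.cast : ℤ → ℚ)).det = 0 := by
      rw [show (A ^ k - 1).map (Int.cast : ℤ → ℚ)
          = (Int.castRingHom ℚ).mapMatrix (A ^ k - 1) from rfl, ← RingHom.map_det, hdet0,
        map_zero]
    obtain ⟨q, hq0, hqker⟩ := Matrix.exists_mulVec_eq_zero_iff.2 hdetQ
    obtain ⟨i0, hi0⟩ := Function.ne_iff.1 hq0
    set v : Fin n → ℝ := fun i => Real.sqrt 2 * (q i : ℝ) with hv
    have hkerR : ((A ^ k - 1).map (Int.cast : ℤ → ℝ)).mulVec (fun i => ((q i : ℝ))) = 0 := by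
      have hmm : (A ^ k - 1).map (Int.cast : ℤ → ℝ)
          = ((A ^ k - 1).map (Int.cast : ℤ → ℚ)).map (Rat.cast : ℚ → ℝ) := by
        rw [Matrix.map_map]; rfl
      rw [hmm]
      funext i
      have := RingHom.map_mulVec (Rat.castHom ℝ) ((A ^ k - 1).map (Int.cast : ℤ → ℚ)) q i
      rw [hqker] at this
      simpa [Function.comp_def] using this.symm
    have hvker : ((A ^ k - 1).map (Int.cast : ℤ → ℝ)).mulVec v = fun i => (((0 : Fin n → ℤ) i : ℝ)) := by
      have : v = Real.sqrt 2 • fun i => ((q i : ℝ)) := rfl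
      rw [this, mulVec_smul, hkerR]
      funext i; simp
    have hper : torusProj n v ∈ {x : Torus n | ∃ k : ℕ, 1 ≤ k ∧ fA^[k] x = x} :=
      ⟨k, hk1, (period_iff A fA hfA k v).2 ⟨0, hvker⟩⟩
    rw [hEq] at hper
    obtain ⟨r, hr⟩ := hper
    obtain ⟨c, hc⟩ := (torusProj_eq_iff.1 hr) i0
    have hirr : Irrational (Real.sqrt 2 * (q i0 : ℝ)) :=
      irrational_sqrt_two.mul_ratCast hi0
    apply (c + r i0 : ℚ).not_irrational
    have : Real.sqrt 2 * (q i0 : ℝ) = ((c + r i0 : ℚ) : ℝ) := by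
      push_cast
      have : v i0 - (r i0 : ℝ) = (c : ℝ) := hc
      rw [hv] at this
      simp only at this
      linarith
    rwa [this] at hirr
  · -- no root of unity → sets are equal
    intro hNo
    ext x
    constructor
    · rintro ⟨k, hk1, hper⟩
      obtain ⟨v, rfl⟩ := torusProj_surjective x
      obtain ⟨m, hm⟩ := (period_iff A fA hfA k v).1 hper
      have hdet : (A ^ k - 1).det ≠ 0 := by
        intro h
        obtain ⟨z, hz, hzk⟩ := (det_pow_sub_one_eq_zero_iff A hk1).1 h
        exact hNo z hz ⟨k, hk1, hzk⟩
      set B : Matrix (Fin n) (Fin n) ℚ := (A ^ k - 1).map (Int.cast : ℤ → ℚ) with hB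
      have hdetB : IsUnit B.det := by
        rw [hB, show (A ^ k - 1).map (Int.cast : ℤ → ℚ)
            = (Int.castRingHom ℚ).mapMatrix (A ^ k - 1) from rfl, ← RingHom.map_det, eq_intCast]
        exact isUnit_iff_ne_zero.2 (by exact_mod_cast hdet)
      set qv : Fin n → ℚ := B⁻¹.mulVec (fun i => ((m i : ℚ))) with hqv
      have hBq : B.mulVec qv = fun i => ((m i : ℚ)) := by
        rw [hqv, mulVec_mulVec, Matrix.mul_nonsing_inv _ hdetB, one_mulVec]
      have hcastR : ((A ^ k - 1).map (Int.cast : ℤ → ℝ)).mulVec (fun i => ((qv i : ℝ)))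
          = fun i => ((m i : ℝ)) := by
        have hmm : (A ^ k - 1).map (Int.cast : ℤ → ℝ) = B.map (Rat.cast : ℚ → ℝ) := by
          rw [hB, Matrix.map_map]; rfl
        rw [hmm]
        funext i
        have h2 := RingHom.map_mulVec (Rat.castHom ℝ) B qv i
        rw [hBq] at h2
        simpa [Function.comp_def] using h2.symm
      have hinj : Function.Injective (((A ^ k - 1).map (Int.cast : ℤ → ℝ)).mulVec) := by
        rw [mulVec_injective_iff_isUnit, Matrix.isUnit_iff_isUnit_det,
          show (A ^ k - 1).map (Int.cast : ℤ → ℝ)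
            = (Int.castRingHom ℝ).mapMatrix (A ^ k - 1) from rfl, ← RingHom.map_det, eq_intCast]
        exact isUnit_iff_ne_zero.2 (by exact_mod_cast hdet)
      have hveq : v = fun i => ((qv i : ℝ)) := hinj (by rw [hm, hcastR])
      exact ⟨qv, by rw [hveq]⟩
    · rintro ⟨q, rfl⟩
      obtain ⟨k, hk1, m, hmk⟩ := rat_periodic A hAdet q
      exact ⟨k, hk1, (period_iff A fA hfA k _).2 ⟨m, hmk⟩⟩
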